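/- Let G be a group and let σ : Σ* → G and τ : Δ* → G be two surjective monoid homomorphisms from free monoids over finite alphabets. If the word problem σ⁻¹(1) ⊆ Σ* is a context-free language, then τ⁻¹(1) ⊆ Δ* is also a context-free language. -/

import Mathlib

namespace CFWP
open ContextFreeGrammar

variable {T : Type} {g : ContextFreeGrammar.{0} T}

lemma nt_not_mem_map_terminal {T N : Type} {A : N} {w : List T} :
    Symbol.nonterminal A ∈ List.map (Symbol.terminal : T → Symbol T N) w → False := by
  intro h
  simp only [List.mem_map] at h
  obtain ⟨a, -, ha⟩ := h
  cases ha

lemma rewrites_singleton_nt {A : g.NT} {r : ContextFreeRule T g.NT}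
    {v : List (Symbol T g.NT)} (h : r.Rewrites [Symbol.nonterminal A] v) :
    r.input = A ∧ v = r.output := by
  obtain ⟨p, q, h1, h2⟩ := h.exists_parts
  have hl := congrArg List.length h1
  simp only [List.length_append, List.length_cons, List.length_nil] at hl
  have hp : p = [] := List.length_eq_zero_iff.1 (by omega)
  have hq : q = [] := List.length_eq_zero_iff.1 (by omega)
  subst hp hq
  simp only [List.nil_append, List.append_nil] at h1 h2
  refine ⟨?_, h2⟩
  injection h1 with h1' _
  injection h1' with h1''
  exact h1''.symm

lemma produces_map_terminal {w : List T} {t : List (Symbol T g.NT)}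
    (h : g.Produces (List.map Symbol.terminal w) t) : False := by
  obtain ⟨r, -, hr⟩ := h
  obtain ⟨p, q, h1, -⟩ := hr.exists_parts
  have : Symbol.nonterminal r.input ∈ List.map (Symbol.terminal : T → Symbol T g.NT) w := by
    rw [h1]; simp
  exact nt_not_mem_map_terminal this

lemma derives_map_terminal_eq {w : List T} {t : List (Symbol T g.NT)}
    (h : g.Derives (List.map Symbol.terminal w) t) : t = List.map Symbol.terminal w := by
  rcases h.eq_or_head with heq | ⟨v, hp, -⟩
  · exact heq.symm
  · exact absurd hp produces_map_terminal

lemma derives_append {s₁ s₂ t₁ t₂ : List (Symbol T g.NT)}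
    (h1 : g.Derives s₁ t₁) (h2 : g.Derives s₂ t₂) : g.Derives (s₁ ++ s₂) (t₁ ++ t₂) :=
  (h1.append_right s₂).trans (h2.append_left t₁)

lemma produces_append_split {s₁ s₂ u : List (Symbol T g.NT)}
    (h : g.Produces (s₁ ++ s₂) u) :
    (∃ s₁', g.Produces s₁ s₁' ∧ u = s₁' ++ s₂) ∨ (∃ s₂', g.Produces s₂ s₂' ∧ u = s₁ ++ s₂') := by
  obtain ⟨r, hrmem, hr⟩ := h
  obtain ⟨p, q, h1, h2⟩ := hr.exists_parts
  rw [List.append_assoc] at h1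
  rcases List.append_eq_append_iff.1 h1 with ⟨a', hp, hs2⟩ | ⟨c', hs1, hrest⟩
  · -- p = s₁ ++ a', s₂ = a' ++ [nt] ++ q
    right
    refine ⟨a' ++ r.output ++ q, ⟨r, hrmem, ?_⟩, ?_⟩
    · rw [hs2, ← List.append_assoc]
      exact r.rewrites_of_exists_parts a' q
    · rw [h2, hp]; simp [List.append_assoc]
  · -- s₁ = p ++ c', [nt] ++ q = c' ++ s₂
    rcases c' with _ | ⟨x, c''⟩
    · -- c' = [] : s₁ = p , s₂ = [nt] ++ q
      right
      refine ⟨r.output ++ q, ⟨r, hrmem, ?_⟩, ?_⟩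
      · have : s₂ = [Symbol.nonterminal r.input] ++ q := by simpa using hrest.symm
        rw [this]
        simpa using r.rewrites_of_exists_parts [] q
      · rw [h2, hs1]; simp [List.append_assoc]
    · -- c' = x :: c'' with x = nt r.input, q = c'' ++ s₂
      have hx : x = Symbol.nonterminal r.input := by
        have := hrest
        rw [List.cons_append] at this
        injection this with h' _
        exact h'.symm
      have hq : q = c'' ++ s₂ := by
        rw [List.cons_append] at hrest
        injection hrest with _ h'
      left
      refine ⟨p ++ r.output ++ c'', ⟨r, hrmem, ?_⟩, ?_⟩
      · rw [hs1, hx]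
        simpa using r.rewrites_of_exists_parts p c''
      · rw [h2, hq]; simp [List.append_assoc]

inductive DerivesIn (g : ContextFreeGrammar.{0} T) :
    List (Symbol T g.NT) → List (Symbol T g.NT) → ℕ → Prop
  | refl (s) : DerivesIn g s s 0
  | head {s t u : List (Symbol T g.NT)} {n : ℕ} :
      g.Produces s t → DerivesIn g t u n → DerivesIn g s u (n + 1)

lemma DerivesIn.tail {s t u : List (Symbol T g.NT)} {n : ℕ}
    (h : DerivesIn g s t n) (h2 : g.Produces t u) : DerivesIn g s u (n + 1) := by
  induction h with
  | refl s => exact DerivesIn.head h2 (DerivesIn.refl u)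
  | head hp _ ih => exact DerivesIn.head hp (ih h2)

lemma derivesIn_of_derives {s t : List (Symbol T g.NT)} (h : g.Derives s t) :
    ∃ n, DerivesIn g s t n := by
  induction h with
  | refl => exact ⟨0, DerivesIn.refl s⟩
  | tail _ hp ih => obtain ⟨n, hn⟩ := ih; exact ⟨n + 1, hn.tail hp⟩

lemma DerivesIn.derives {s t : List (Symbol T g.NT)} {n : ℕ} (h : DerivesIn g s t n) :
    g.Derives s t := by
  induction h with
  | refl s => rfl
  | head hp _ ih => exact hp.trans_derives ih

lemma DerivesIn.append_split {x t : List (Symbol T g.NT)} {n : ℕ}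
    (h : DerivesIn g x t n) :
    ∀ s₁ s₂, x = s₁ ++ s₂ → ∃ t₁ t₂ n₁ n₂, t = t₁ ++ t₂ ∧ n₁ + n₂ = n ∧
      DerivesIn g s₁ t₁ n₁ ∧ DerivesIn g s₂ t₂ n₂ := by
  induction h with
  | refl s =>
    intro s₁ s₂ hx
    exact ⟨s₁, s₂, 0, 0, hx, rfl, DerivesIn.refl s₁, DerivesIn.refl s₂⟩
  | @head s t u n hp _ ih =>
    intro s₁ s₂ hx
    subst hx
    rcases produces_append_split hp with ⟨s₁', hp1, ht⟩ | ⟨s₂', hp2, ht⟩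
    · obtain ⟨t₁, t₂, n₁, n₂, h1, h2, h3, h4⟩ := ih s₁' s₂ ht
      exact ⟨t₁, t₂, n₁ + 1, n₂, h1, by omega, DerivesIn.head hp1 h3, h4⟩
    · obtain ⟨t₁, t₂, n₁, n₂, h1, h2, h3, h4⟩ := ih s₁ s₂' ht
      exact ⟨t₁, t₂, n₁, n₂ + 1, h1, by omega, h3, DerivesIn.head hp2 h4⟩

/-- Generic mapping lemma between grammars. -/
lemma derives_flatMap {T₁ T₂ : Type} (g₁ : ContextFreeGrammar.{0} T₁)
    (g₂ : ContextFreeGrammar.{0} T₂) (m : Symbol T₁ g₁.NT → List (Symbol T₂ g₂.NT))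
    (hm : ∀ r ∈ g₁.rules, g₂.Derives (m (Symbol.nonterminal r.input)) (r.output.flatMap m))
    {s t : List (Symbol T₁ g₁.NT)} (h : g₁.Derives s t) :
    g₂.Derives (s.flatMap m) (t.flatMap m) := by
  induction h with
  | refl => rfl
  | tail _ hp ih =>
    refine ih.trans ?_
    obtain ⟨r, hrmem, hr⟩ := hp
    obtain ⟨p, q, h1, h2⟩ := hr.exists_parts
    subst h1 h2
    simp only [List.flatMap_append]
    have base := hm r hrmem
    have : (([Symbol.nonterminal r.input] : List (Symbol T₁ g₁.NT)).flatMap m)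
        = m (Symbol.nonterminal r.input) := by simp
    refine derives_append (derives_append (Derives.refl _) ?_) (Derives.refl _)
    rw [this]; exact base

section ImageLemma

variable {T U : Type} (g : ContextFreeGrammar.{0} T) (f : T → List U)

/-- Symbol map expanding terminals. -/
def mA : Symbol T g.NT → List (Symbol U g.NT)
  | Symbol.terminal b => (f b).map Symbol.terminal
  | Symbol.nonterminal A => [Symbol.nonterminal A]

/-- Grammar for the image of a language under a letter-to-word map. -/
noncomputable abbrev gA : ContextFreeGrammar.{0} U :=
  ⟨g.NT, g.initial,
    ((g.rules.finite_toSet.image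
      (fun r : ContextFreeRule T g.NT => ⟨r.input, r.output.flatMap (mA g f)⟩))).toFinset⟩

lemma gA_NT : (gA g f).NT = g.NT := rfl

lemma mem_gA_rules {r' : ContextFreeRule U g.NT} :
    r' ∈ (gA g f).rules ↔ ∃ r ∈ g.rules, r' = ⟨r.input, r.output.flatMap (mA g f)⟩ := by
  simp only [gA, Set.Finite.mem_toFinset, Set.mem_image, Finset.mem_coe]
  constructor
  · rintro ⟨r, hr, rfl⟩; exact ⟨r, hr, rfl⟩
  · rintro ⟨r, hr, rfl⟩; exact ⟨r, hr, rfl⟩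

lemma mA_flatMap_map_terminal (w : List T) :
    (List.map (Symbol.terminal : T → Symbol T g.NT) w).flatMap (mA g f)
      = List.map Symbol.terminal (w.flatMap f) := by
  induction w with
  | nil => rfl
  | cons a w ih => simp [mA, ih]

/-- Pull back a decomposition along the expansion map. -/
lemma mA_pullback : ∀ (s : List (Symbol T g.NT)) (p' q' : List (Symbol U g.NT)) (A : g.NT),
    s.flatMap (mA g f) = p' ++ [Symbol.nonterminal A] ++ q' →
    ∃ p q, s = p ++ [Symbol.nonterminal A] ++ q ∧
      p.flatMap (mA g f) = p' ∧ q.flatMap (mA g f) = q' := by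
  intro s
  induction s with
  | nil =>
    intro p' q' A h
    exfalso
    have : (Symbol.nonterminal A : Symbol U g.NT) ∈ ([] : List (Symbol U g.NT)) := by
      rw [show ([] : List (Symbol U g.NT)) = List.flatMap (mA g f) [] from rfl, h]; simp
    simp at this
  | cons X rest ih =>
    intro p' q' A h
    rw [List.flatMap_cons, List.append_assoc] at h
    rcases List.append_eq_append_iff.1 h with ⟨a', hA1, hA2⟩ | ⟨c', hB1, hB2⟩
    · -- hA1 : p' = mA X ++ a', hA2 : rest.flatMap = a' ++ ([nt A] ++ q')
      obtain ⟨p, q, h1, h2, h3⟩ := ih a' q' A (by rw [hA2, ← List.append_assoc])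
      refine ⟨X :: p, q, by rw [h1]; rfl, ?_, h3⟩
      rw [List.flatMap_cons, h2, hA1]
    · -- hB1 : mA X = p' ++ c', hB2 : [nt A] ++ q' = c' ++ rest.flatMap
      rcases c' with _ | ⟨y, c''⟩
      · obtain ⟨p, q, h1, h2, h3⟩ := ih [] q' A (by simpa using hB2.symm)
        refine ⟨X :: p, q, by rw [h1]; rfl, ?_, h3⟩
        rw [List.flatMap_cons, h2]
        simpa using hB1
      · have hy : y = Symbol.nonterminal A := by
          rw [List.cons_append] at hB2
          injection hB2 with h' _
          exact h'.symm
        subst hy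
        have hq' : q' = c'' ++ rest.flatMap (mA g f) := by
          rw [List.cons_append] at hB2
          injection hB2 with _ h'
        cases X with
        | terminal b =>
          exfalso
          have : (Symbol.nonterminal A : Symbol U g.NT) ∈ mA g f (Symbol.terminal b) := by
            rw [hB1]; simp
          exact nt_not_mem_map_terminal this
        | nonterminal B =>
          have hx : mA g f (Symbol.nonterminal B) = [Symbol.nonterminal B] := rfl
          rw [hx] at hB1
          have hlen := congrArg List.length hB1
          simp only [List.length_cons, List.length_append, List.length_nil] at hlen
          have hp'nil : p' = [] := List.length_eq_zero_iff.1 (by omega)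
          have hc''nil : c'' = [] := List.length_eq_zero_iff.1 (by omega)
          subst hp'nil hc''nil
          simp only [List.nil_append] at hB1
          have hBA : B = A := by
            injection hB1 with h' _
            injection h' with h''
          subst hBA
          refine ⟨[], rest, by simp, rfl, ?_⟩
          rw [hq']; simp

lemma gA_produces_pullback {s : List (Symbol T g.NT)} {v : List (Symbol U g.NT)}
    (h : (gA g f).Produces (s.flatMap (mA g f)) v) :
    ∃ t, g.Produces s t ∧ v = t.flatMap (mA g f) := by
  obtain ⟨r', hr'mem, hr'⟩ := h
  rw [mem_gA_rules] at hr'mem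
  obtain ⟨r, hrmem, rfl⟩ := hr'mem
  obtain ⟨p', q', h1, h2⟩ := hr'.exists_parts
  obtain ⟨p, q, h3, h4, h5⟩ := mA_pullback g f s p' q' r.input h1
  refine ⟨p ++ r.output ++ q, ⟨r, hrmem, h3 ▸ r.rewrites_of_exists_parts p q⟩, ?_⟩
  rw [h2, ← h4, ← h5]
  simp [List.flatMap_append]

lemma gA_derives_pullback {u : List (Symbol U g.NT)} {t' : List (Symbol U g.NT)}
    (h : (gA g f).Derives u t') :
    ∀ s : List (Symbol T g.NT), u = s.flatMap (mA g f) →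
      ∃ t, g.Derives s t ∧ t' = t.flatMap (mA g f) := by
  induction h using Relation.ReflTransGen.head_induction_on with
  | refl => exact fun s hs => ⟨s, Derives.refl s, hs⟩
  | head hp _ ih =>
    intro s hs
    subst hs
    obtain ⟨t₁, hp1, rfl⟩ := gA_produces_pullback g f hp
    obtain ⟨t, hd, rfl⟩ := ih t₁ rfl
    exact ⟨t, hp1.trans_derives hd, rfl⟩

/-- A list of symbols without nonterminals is a terminal word. -/
lemma eq_map_terminal_of_no_nt {t : List (Symbol T g.NT)}
    (h : ∀ A : g.NT, Symbol.nonterminal A ∉ t) :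
    ∃ w : List T, t = List.map Symbol.terminal w := by
  induction t with
  | nil => exact ⟨[], rfl⟩
  | cons X rest ih =>
    obtain ⟨w, hw⟩ := ih (fun A hA => h A (List.mem_cons_of_mem _ hA))
    cases X with
    | terminal a => exact ⟨a :: w, by rw [hw]; rfl⟩
    | nonterminal A => exact absurd List.mem_cons_self (h A)

lemma gA_language : (gA g f).language = {v | ∃ w ∈ g.language, v = w.flatMap f} := by
  ext v
  constructor
  · intro hv
    have hd : (gA g f).Derives [Symbol.nonterminal g.initial] (List.map Symbol.terminal v) := hv
    obtain ⟨t, hder, hteq⟩ := gA_derives_pullback g f hd [Symbol.nonterminal g.initial] (by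
      simp [mA])
    -- t has no nonterminals
    have hno : ∀ A : g.NT, Symbol.nonterminal A ∉ t := by
      intro A hA
      have : (Symbol.nonterminal A : Symbol U g.NT) ∈ List.map Symbol.terminal v := by
        rw [hteq]
        obtain ⟨l1, l2, rfl⟩ := List.append_of_mem hA
        simp only [List.flatMap_append, List.flatMap_cons]
        refine List.mem_append.2 (Or.inr (List.mem_append.2 (Or.inl ?_)))
        simp [mA]
      exact nt_not_mem_map_terminal this
    obtain ⟨w, rfl⟩ := eq_map_terminal_of_no_nt g hno
    refine ⟨w, hder, ?_⟩
    rw [mA_flatMap_map_terminal] at hteq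
    exact List.map_injective_iff.2 (fun _ _ h => Symbol.terminal.inj h) hteq
  · rintro ⟨w, hw, rfl⟩
    have hd : g.Derives [Symbol.nonterminal g.initial] (List.map Symbol.terminal w) := hw
    have := derives_flatMap g (gA g f) (mA g f) ?_ hd
    · show (gA g f).Derives [Symbol.nonterminal (gA g f).initial] _
      have h1 : ([Symbol.nonterminal g.initial] : List (Symbol T g.NT)).flatMap (mA g f)
          = [Symbol.nonterminal g.initial] := by simp [mA]
      rw [h1, mA_flatMap_map_terminal] at this
      exact this
    · intro r hr
      have : (⟨r.input, r.output.flatMap (mA g f)⟩ : ContextFreeRule U g.NT) ∈ (gA g f).rules :=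
        (mem_gA_rules g f).2 ⟨r, hr, rfl⟩
      have hrw := ContextFreeRule.Rewrites.input_output (r := (⟨r.input,
        r.output.flatMap (mA g f)⟩ : ContextFreeRule U g.NT))
      exact (Produces.single ⟨_, this, by simpa [mA] using hrw⟩)

end ImageLemma

section InsertionLemma

set_option linter.unusedSectionVars false

variable {T Γ : Type} [Finite Γ] (g : ContextFreeGrammar.{0} T)

/-- The insertion nonterminal. -/
abbrev DSym : Symbol (T ⊕ Γ) (g.NT ⊕ Bool) := Symbol.nonterminal (Sum.inr false)

/-- Symbol embedding, adding an insertion point after each symbol. -/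
def mB : Symbol T g.NT → List (Symbol (T ⊕ Γ) (g.NT ⊕ Bool))
  | Symbol.terminal a => [Symbol.terminal (Sum.inl a), DSym g]
  | Symbol.nonterminal A => [Symbol.nonterminal (Sum.inl A), DSym g]

def ruleBStart : ContextFreeRule (T ⊕ Γ) (g.NT ⊕ Bool) :=
  ⟨Sum.inr true, DSym g :: mB (Γ := Γ) g (Symbol.nonterminal g.initial)⟩

def ruleBEps : ContextFreeRule (T ⊕ Γ) (g.NT ⊕ Bool) := ⟨Sum.inr false, []⟩

def ruleBCons (γ : Γ) : ContextFreeRule (T ⊕ Γ) (g.NT ⊕ Bool) :=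
  ⟨Sum.inr false, [Symbol.terminal (Sum.inr γ), DSym g]⟩

def ruleBMain (r : ContextFreeRule T g.NT) : ContextFreeRule (T ⊕ Γ) (g.NT ⊕ Bool) :=
  ⟨Sum.inl r.input, r.output.flatMap (mB (Γ := Γ) g)⟩

def rulesBSet : Set (ContextFreeRule (T ⊕ Γ) (g.NT ⊕ Bool)) :=
  {ruleBStart (Γ := Γ) g} ∪ {ruleBEps (Γ := Γ) g} ∪
  (⋃ γ : Γ, {ruleBCons g γ}) ∪ (ruleBMain (Γ := Γ) g '' g.rules)

lemma rulesBSet_finite : (rulesBSet (Γ := Γ) g).Finite :=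
  (((Set.finite_singleton _).union (Set.finite_singleton _)).union
    (Set.finite_iUnion fun _ => Set.finite_singleton _)).union
    (g.rules.finite_toSet.image _)

/-- Grammar for the insertion closure. -/
noncomputable abbrev gB : ContextFreeGrammar.{0} (T ⊕ Γ) :=
  ⟨g.NT ⊕ Bool, Sum.inr true, (rulesBSet_finite (Γ := Γ) g).toFinset⟩

lemma mem_gB_rules {r' : ContextFreeRule (T ⊕ Γ) (g.NT ⊕ Bool)} :
    r' ∈ (gB (Γ := Γ) g).rules ↔ r' ∈ rulesBSet (Γ := Γ) g :=
  Set.Finite.mem_toFinset _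

/-- Projection deleting the inserted letters. -/
def projl : List (T ⊕ Γ) → List T :=
  List.filterMap (Sum.elim some fun _ => none)

@[simp] lemma projl_nil : projl (Γ := Γ) (T := T) [] = [] := rfl
@[simp] lemma projl_cons_inl (a : T) (v : List (T ⊕ Γ)) :
    projl (Sum.inl a :: v) = a :: projl v := rfl
@[simp] lemma projl_cons_inr (γ : Γ) (v : List (T ⊕ Γ)) :
    projl (Sum.inr γ :: v) = projl v := rfl

/-- Soundness symbol map. -/
def mS : Symbol (T ⊕ Γ) (g.NT ⊕ Bool) → List (Symbol T g.NT)
  | Symbol.terminal (Sum.inl a) => [Symbol.terminal a]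
  | Symbol.terminal (Sum.inr _) => []
  | Symbol.nonterminal (Sum.inl A) => [Symbol.nonterminal A]
  | Symbol.nonterminal (Sum.inr false) => []
  | Symbol.nonterminal (Sum.inr true) => [Symbol.nonterminal g.initial]

lemma mB_flatMap_mS (s : List (Symbol T g.NT)) :
    (s.flatMap (mB (Γ := Γ) g)).flatMap (mS (Γ := Γ) g) = s := by
  induction s with
  | nil => rfl
  | cons X rest ih =>
    cases X <;> simp [mB, mS, ih]

lemma map_terminal_flatMap_mS (v : List (T ⊕ Γ)) :
    (List.map Symbol.terminal v).flatMap (mS (Γ := Γ) g)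
      = List.map Symbol.terminal (projl v) := by
  induction v with
  | nil => rfl
  | cons x v ih => cases x <;> simp [mS, ih]

lemma gB_sound {v : List (T ⊕ Γ)} (hv : v ∈ (gB (Γ := Γ) g).language) :
    projl v ∈ g.language := by
  have hd : (gB (Γ := Γ) g).Derives [Symbol.nonterminal (Sum.inr true)]
      (List.map Symbol.terminal v) := hv
  have key := derives_flatMap (gB (Γ := Γ) g) g (mS (Γ := Γ) g) ?_ hd
  · rw [map_terminal_flatMap_mS] at key
    simpa [mS] using key
  · intro r hr
    rw [mem_gB_rules] at hr
    rcases hr with ((h1 | h1) | h1) | h1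
    · rw [Set.mem_singleton_iff] at h1
      subst h1
      have : ((ruleBStart (Γ := Γ) g).output).flatMap (mS (Γ := Γ) g)
          = [Symbol.nonterminal g.initial] := by
        simp [ruleBStart, mS, mB]
      rw [this]
      exact Derives.refl _
    · rw [Set.mem_singleton_iff] at h1
      subst h1
      exact Derives.refl _
    · simp only [Set.mem_iUnion, Set.mem_singleton_iff] at h1
      obtain ⟨γ, rfl⟩ := h1
      exact Derives.refl _
    · obtain ⟨r₀, hr₀, rfl⟩ := h1
      have : ((ruleBMain (Γ := Γ) g r₀).output).flatMap (mS (Γ := Γ) g) = r₀.output :=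
        mB_flatMap_mS (Γ := Γ) g _
      rw [this]
      exact Produces.single ⟨r₀, hr₀, ContextFreeRule.Rewrites.input_output⟩

lemma gB_rule_start_mem : ruleBStart (Γ := Γ) g ∈ (gB (Γ := Γ) g).rules :=
  (mem_gB_rules g).2 (Or.inl (Or.inl (Or.inl rfl)))
lemma gB_rule_eps_mem : ruleBEps (Γ := Γ) g ∈ (gB (Γ := Γ) g).rules :=
  (mem_gB_rules g).2 (Or.inl (Or.inl (Or.inr rfl)))
lemma gB_rule_cons_mem (γ : Γ) : ruleBCons g γ ∈ (gB (Γ := Γ) g).rules :=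
  (mem_gB_rules g).2 (Or.inl (Or.inr (Set.mem_iUnion.2 ⟨γ, rfl⟩)))
lemma gB_rule_main_mem {r : ContextFreeRule T g.NT} (hr : r ∈ g.rules) :
    ruleBMain (Γ := Γ) g r ∈ (gB (Γ := Γ) g).rules :=
  (mem_gB_rules g).2 (Or.inr ⟨r, hr, rfl⟩)

lemma gB_D_derives (γs : List Γ) :
    (gB (Γ := Γ) g).Derives [DSym g]
      (γs.map fun γ => Symbol.terminal (Sum.inr γ)) := by
  induction γs with
  | nil =>
    have hio : (ruleBEps (Γ := Γ) g).Rewrites [Symbol.nonterminal (Sum.inr false)] [] :=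
      ContextFreeRule.Rewrites.input_output
    exact Produces.single ⟨_, gB_rule_eps_mem g, hio⟩
  | cons γ γs ih =>
    have hio : (ruleBCons g γ).Rewrites [DSym g]
        [Symbol.terminal (Sum.inr γ), DSym g] :=
      ContextFreeRule.Rewrites.input_output
    refine Produces.trans_derives ⟨_, gB_rule_cons_mem g γ, hio⟩ ?_
    have := ih.append_left [Symbol.terminal (Sum.inr γ)]
    simpa using this

lemma gB_lift_derives {s t : List (Symbol T g.NT)} (h : g.Derives s t) :
    (gB (Γ := Γ) g).Derives (s.flatMap (mB (Γ := Γ) g)) (t.flatMap (mB (Γ := Γ) g)) := by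
  refine derives_flatMap g (gB (Γ := Γ) g) (mB (Γ := Γ) g) ?_ h
  intro r hr
  show (gB (Γ := Γ) g).Derives [Symbol.nonterminal (Sum.inl r.input), DSym g] _
  have step1 : (gB (Γ := Γ) g).Produces [Symbol.nonterminal (Sum.inl r.input), DSym g]
      (r.output.flatMap (mB (Γ := Γ) g) ++ [DSym g]) :=
    ⟨_, gB_rule_main_mem g hr, ContextFreeRule.Rewrites.head [DSym g]⟩
  refine step1.trans_derives (Produces.single ⟨_, gB_rule_eps_mem g, ?_⟩)
  have hio : (ruleBEps (Γ := Γ) g).Rewrites [Symbol.nonterminal (Sum.inr false)] [] :=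
    ContextFreeRule.Rewrites.input_output
  have := hio.append_left (r.output.flatMap (mB (Γ := Γ) g))
  simpa using this

lemma projl_eq_nil {v : List (T ⊕ Γ)} (h : projl v = []) :
    ∃ γs : List Γ, v = γs.map Sum.inr := by
  induction v with
  | nil => exact ⟨[], rfl⟩
  | cons x v ih =>
    cases x with
    | inl a => simp at h
    | inr γ =>
      simp only [projl_cons_inr] at h
      obtain ⟨γs, rfl⟩ := ih h
      exact ⟨γ :: γs, rfl⟩

lemma projl_eq_cons {v : List (T ⊕ Γ)} {a : T} {x : List T} (h : projl v = a :: x) :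
    ∃ (γs : List Γ) (v₂ : List (T ⊕ Γ)),
      v = γs.map Sum.inr ++ Sum.inl a :: v₂ ∧ projl v₂ = x := by
  induction v with
  | nil => simp [projl] at h
  | cons y v ih =>
    cases y with
    | inl a' =>
      simp only [projl_cons_inl, List.cons.injEq] at h
      exact ⟨[], v, by rw [h.1]; rfl, h.2⟩
    | inr γ =>
      simp only [projl_cons_inr] at h
      obtain ⟨γs, v₂, rfl, h2⟩ := ih h
      exact ⟨γ :: γs, v₂, rfl, h2⟩

lemma gB_assemble : ∀ (x : List T) (v : List (T ⊕ Γ)), projl v = x →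
    (gB (Γ := Γ) g).Derives
      (DSym g :: (List.map Symbol.terminal x).flatMap (mB (Γ := Γ) g))
      (List.map Symbol.terminal v) := by
  intro x
  induction x with
  | nil =>
    intro v hv
    obtain ⟨γs, rfl⟩ := projl_eq_nil hv
    have := gB_D_derives (Γ := Γ) g γs
    simpa [List.map_map, Function.comp_def] using this
  | cons a x ih =>
    intro v hv
    obtain ⟨γs, v₂, rfl, h2⟩ := projl_eq_cons hv
    have hD : (gB (Γ := Γ) g).Derives [DSym g]
        (List.map Symbol.terminal (γs.map Sum.inr)) := by
      have := gB_D_derives (Γ := Γ) g γs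
      simpa [List.map_map, Function.comp_def] using this
    have htail := ih v₂ h2
    have := derives_append (derives_append hD
      (Derives.refl [Symbol.terminal (Sum.inl a)])) htail
    refine Derives.trans ?_ (by simpa [List.map_append] using this)
    have : (List.map (Symbol.terminal (N := g.NT)) (a :: x)).flatMap (mB (Γ := Γ) g)
        = [Symbol.terminal (Sum.inl a), DSym g]
          ++ (List.map Symbol.terminal x).flatMap (mB (Γ := Γ) g) := by
      simp [mB]
    rw [this]
    exact Derives.refl _

lemma gB_language :
    (gB (Γ := Γ) g).language = {v | projl v ∈ g.language} := by
  ext v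
  constructor
  · exact gB_sound g
  · intro hv
    show (gB (Γ := Γ) g).Derives [Symbol.nonterminal (Sum.inr true)] _
    have hio : (ruleBStart (Γ := Γ) g).Rewrites [Symbol.nonterminal (Sum.inr true)]
        (DSym g :: mB (Γ := Γ) g (Symbol.nonterminal g.initial)) :=
      ContextFreeRule.Rewrites.input_output
    have step1 : (gB (Γ := Γ) g).Produces [Symbol.nonterminal (Sum.inr true)]
        (DSym g :: mB (Γ := Γ) g (Symbol.nonterminal g.initial)) :=
      ⟨_, gB_rule_start_mem g, hio⟩
    refine step1.trans_derives ?_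
    have hlift := gB_lift_derives (Γ := Γ) g (show g.Derives [Symbol.nonterminal g.initial]
      (List.map Symbol.terminal (projl v)) from hv)
    have h2 := hlift.append_left [DSym g]
    refine Derives.trans (by simpa [mB] using h2) ?_
    exact gB_assemble g (projl v) v rfl

end InsertionLemma

section IntersectionLemma

set_option linter.unusedSectionVars false

variable {β : Type} [Finite β] (g : ContextFreeGrammar.{0} β)
  {Q : Type} [Finite Q] (step : Q → β → Q → Prop) (q0 qf : Q)

/-- Nonterminals of the intersection grammar. -/
abbrev NTC (g : ContextFreeGrammar.{0} β) (Q : Type) : Type :=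
  Unit ⊕ (Q × (g.NT ⊕ β) × Q)

def liftSym (p : Q) (X : Symbol β g.NT) (q : Q) : Symbol β (NTC g Q) :=
  match X with
  | Symbol.terminal b => Symbol.nonterminal (Sum.inr (p, Sum.inr b, q))
  | Symbol.nonterminal A => Symbol.nonterminal (Sum.inr (p, Sum.inl A, q))

inductive Lifts : Q → List (Symbol β g.NT) → Q → List (Symbol β (NTC g Q)) → Prop
  | nil (q : Q) : Lifts q [] q []
  | cons (p m q : Q) (X : Symbol β g.NT) (s : List (Symbol β g.NT))
      (sh : List (Symbol β (NTC g Q))) :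
      Lifts m s q sh → Lifts p (X :: s) q (liftSym g p X m :: sh)

lemma lifts_nil_inv {p q : Q} {sh : List (Symbol β (NTC g Q))}
    (h : Lifts g p [] q sh) : p = q ∧ sh = [] := by
  cases h; exact ⟨rfl, rfl⟩

lemma lifts_cons_inv {p q : Q} {X : Symbol β g.NT} {s : List (Symbol β g.NT)}
    {sh : List (Symbol β (NTC g Q))} (h : Lifts g p (X :: s) q sh) :
    ∃ m t, sh = liftSym g p X m :: t ∧ Lifts g m s q t := by
  cases h with
  | cons _ m _ _ _ t ht => exact ⟨m, t, rfl, ht⟩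

lemma lifts_finite (p : Q) (s : List (Symbol β g.NT)) (q : Q) :
    {sh | Lifts g p s q sh}.Finite := by
  induction s generalizing p with
  | nil =>
    refine (Set.finite_singleton ([] : List (Symbol β (NTC g Q)))).subset ?_
    intro sh hsh
    exact (lifts_nil_inv g hsh).2
  | cons X s ih =>
    refine ((Set.finite_iUnion (fun m : Q =>
      ((ih m).image (fun t => liftSym g p X m :: t)))).subset ?_)
    intro sh hsh
    obtain ⟨m, t, rfl, ht⟩ := lifts_cons_inv g hsh
    exact Set.mem_iUnion.2 ⟨m, ⟨t, ht, rfl⟩⟩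

def ruleCStart : ContextFreeRule β (NTC g Q) :=
  ⟨Sum.inl (), [Symbol.nonterminal (Sum.inr (q0, Sum.inl g.initial, qf))]⟩

def rulesCSet : Set (ContextFreeRule β (NTC g Q)) :=
  {ruleCStart g q0 qf} ∪
  ((fun t : Q × β × Q => (⟨Sum.inr (t.1, Sum.inr t.2.1, t.2.2),
      [Symbol.terminal t.2.1]⟩ : ContextFreeRule β (NTC g Q))) ''
    {t : Q × β × Q | step t.1 t.2.1 t.2.2}) ∪
  (⋃ r ∈ (g.rules : Set (ContextFreeRule β g.NT)), ⋃ p : Q, ⋃ q : Q,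
    (fun sh => (⟨Sum.inr (p, Sum.inl r.input, q), sh⟩ : ContextFreeRule β (NTC g Q))) ''
      {sh | Lifts g p r.output q sh})

lemma rulesCSet_finite : (rulesCSet g step q0 qf).Finite := by
  refine ((Set.finite_singleton _).union ((Set.toFinite _).image _)).union ?_
  refine Set.Finite.biUnion g.rules.finite_toSet fun r _ => ?_
  exact Set.finite_iUnion fun p => Set.finite_iUnion fun q => (lifts_finite g p _ q).image _

/-- The intersection grammar. -/
noncomputable abbrev gC : ContextFreeGrammar.{0} β :=
  ⟨NTC g Q, Sum.inl (), (rulesCSet_finite g step q0 qf).toFinset⟩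

lemma mem_gC_rules {r' : ContextFreeRule β (NTC g Q)} :
    r' ∈ (gC g step q0 qf).rules ↔ r' ∈ rulesCSet g step q0 qf :=
  Set.Finite.mem_toFinset _

/-- Paths in the nondeterministic automaton. -/
def NPath : List β → Q → Q → Prop
  | [] => fun p q => p = q
  | b :: w => fun p q => ∃ m, step p b m ∧ NPath w m q

lemma npath_append {u v : List β} {p r : Q} :
    NPath step (u ++ v) p r ↔ ∃ m, NPath step u p m ∧ NPath step v m r := by
  induction u generalizing p with
  | nil =>
    constructor
    · intro h; exact ⟨p, rfl, h⟩
    · rintro ⟨m, rfl, h⟩; exact h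
  | cons b u ih =>
    constructor
    · rintro ⟨m, hs, h⟩
      obtain ⟨m', h1, h2⟩ := ih.1 h
      exact ⟨m', ⟨m, hs, h1⟩, h2⟩
    · rintro ⟨m', ⟨m, hs, h1⟩, h2⟩
      exact ⟨m, hs, ih.2 ⟨m', h1, h2⟩⟩

/-- Soundness symbol map. -/
def mC : Symbol β (NTC g Q) → List (Symbol β g.NT)
  | Symbol.terminal b => [Symbol.terminal b]
  | Symbol.nonterminal (Sum.inl _) => [Symbol.nonterminal g.initial]
  | Symbol.nonterminal (Sum.inr (_, Sum.inl A, _)) => [Symbol.nonterminal A]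
  | Symbol.nonterminal (Sum.inr (_, Sum.inr b, _)) => [Symbol.terminal b]

lemma lifts_flatMap_mC {p q : Q} {s : List (Symbol β g.NT)}
    {sh : List (Symbol β (NTC g Q))} (h : Lifts g p s q sh) :
    sh.flatMap (mC g) = s := by
  induction h with
  | nil => rfl
  | cons p m q X s sh h ih =>
    cases X <;> simp [liftSym, mC, ih]

@[simp] lemma mC_terminal (b : β) :
    mC (Q := Q) g (Symbol.terminal b) = [Symbol.terminal b] := rfl

lemma map_terminal_flatMap_mC (w : List β) :
    (List.map Symbol.terminal w).flatMap (mC (Q := Q) g) = List.map Symbol.terminal w := by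
  induction w with
  | nil => rfl
  | cons b w ih => simp [ih]

lemma gC_sound_lang {w : List β} (hw : w ∈ (gC g step q0 qf).language) :
    w ∈ g.language := by
  have hd : (gC g step q0 qf).Derives [Symbol.nonterminal (Sum.inl ())]
      (List.map Symbol.terminal w) := hw
  have key := derives_flatMap (gC g step q0 qf) g (mC g) ?_ hd
  · rw [map_terminal_flatMap_mC] at key
    simpa [mC] using key
  · intro r hr
    rw [mem_gC_rules] at hr
    rcases hr with (h1 | h1) | h1
    · rw [Set.mem_singleton_iff] at h1
      subst h1
      simp only [ruleCStart, mC, List.flatMap_cons, List.flatMap_nil, List.append_nil]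
      exact Derives.refl _
    · obtain ⟨⟨p, b, q⟩, -, rfl⟩ := h1
      simp only [mC, List.flatMap_cons, List.flatMap_nil, List.append_nil]
      exact Derives.refl _
    · simp only [Set.mem_iUnion] at h1
      obtain ⟨r₀, hr₀, p, q, sh, hsh, rfl⟩ := h1
      have hsh' : Lifts g p r₀.output q sh := hsh
      simp only [mC]
      rw [lifts_flatMap_mC g hsh']
      exact Produces.single ⟨r₀, hr₀, ContextFreeRule.Rewrites.input_output⟩

/-- Weight of a symbol as a relation on states. -/
def wtC : Symbol β (NTC g Q) → Q → Q → Prop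
  | Symbol.terminal b => fun p q => step p b q
  | Symbol.nonterminal (Sum.inl _) => fun p q => p = q0 ∧ q = qf
  | Symbol.nonterminal (Sum.inr (p', _, q')) => fun p q => p = p' ∧ q = q'

def relList : List (Symbol β (NTC g Q)) → Q → Q → Prop
  | [] => fun p q => p = q
  | X :: s => fun p q => ∃ m, wtC g step q0 qf X p m ∧ relList s m q

lemma relList_append {u v : List (Symbol β (NTC g Q))} {p r : Q} :
    relList g step q0 qf (u ++ v) p r ↔
      ∃ m, relList g step q0 qf u p m ∧ relList g step q0 qf v m r := by
  induction u generalizing p with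
  | nil =>
    constructor
    · intro h; exact ⟨p, rfl, h⟩
    · rintro ⟨m, rfl, h⟩; exact h
  | cons X u ih =>
    constructor
    · rintro ⟨m, hs, h⟩
      obtain ⟨m', h1, h2⟩ := ih.1 h
      exact ⟨m', ⟨m, hs, h1⟩, h2⟩
    · rintro ⟨m', ⟨m, hs, h1⟩, h2⟩
      exact ⟨m, hs, ih.2 ⟨m', h1, h2⟩⟩

lemma lifts_relList {p q : Q} {s : List (Symbol β g.NT)}
    {sh : List (Symbol β (NTC g Q))} (h : Lifts g p s q sh) :
    relList g step q0 qf sh p q := by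
  induction h with
  | nil => rfl
  | cons p m q X s sh h ih =>
    cases X <;> exact ⟨m, ⟨rfl, rfl⟩, ih⟩

lemma gC_rule_relList {r' : ContextFreeRule β (NTC g Q)}
    (hr' : r' ∈ (gC g step q0 qf).rules) {p q : Q}
    (hw : wtC g step q0 qf (Symbol.nonterminal r'.input) p q) :
    relList g step q0 qf r'.output p q := by
  rw [mem_gC_rules] at hr'
  rcases hr' with (h1 | h1) | h1
  · rw [Set.mem_singleton_iff] at h1
    subst h1
    obtain ⟨hp, hq⟩ := hw
    exact ⟨qf, ⟨hp, rfl⟩, hq.symm⟩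
  · obtain ⟨⟨p', b, q'⟩, hstep, rfl⟩ := h1
    obtain ⟨hp, hq⟩ := hw
    refine ⟨q', ?_, hq.symm⟩
    rw [hp]
    exact hstep
  · simp only [Set.mem_iUnion] at h1
    obtain ⟨r₀, hr₀, p', q', sh, hsh, rfl⟩ := h1
    obtain ⟨hp, hq⟩ := hw
    have hsh' : Lifts g p' r₀.output q' sh := hsh
    rw [show (⟨Sum.inr (p', Sum.inl r₀.input, q'), sh⟩ :
      ContextFreeRule β (NTC g Q)).output = sh from rfl, hp, hq]
    exact lifts_relList g step q0 qf hsh'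

lemma gC_produces_relList {s t : List (Symbol β (NTC g Q))}
    (h : (gC g step q0 qf).Produces s t) {p q : Q}
    (hs : relList g step q0 qf s p q) : relList g step q0 qf t p q := by
  obtain ⟨r', hr'mem, hr'⟩ := h
  obtain ⟨u, v, rfl, rfl⟩ := hr'.exists_parts
  rw [relList_append] at hs
  obtain ⟨m2, hs1, hs3⟩ := hs
  rw [relList_append] at hs1
  obtain ⟨m1, hs1, hs2⟩ := hs1
  obtain ⟨m2', hw, hm2⟩ := hs2
  have hm2' : m2' = m2 := hm2
  rw [relList_append]
  refine ⟨m2, ?_, hs3⟩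
  rw [relList_append]
  have hrel := gC_rule_relList g step q0 qf hr'mem hw
  rw [hm2'] at hrel
  exact ⟨m1, hs1, hrel⟩

lemma gC_derives_relList {s t : List (Symbol β (NTC g Q))}
    (h : (gC g step q0 qf).Derives s t) {p q : Q}
    (hs : relList g step q0 qf s p q) : relList g step q0 qf t p q := by
  induction h with
  | refl => exact hs
  | tail _ hp ih => exact gC_produces_relList g step q0 qf hp ih

lemma relList_map_terminal {w : List β} {p q : Q} :
    relList g step q0 qf (List.map Symbol.terminal w) p q ↔ NPath step w p q := by
  induction w generalizing p with
  | nil => exact Iff.rfl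
  | cons b w ih =>
    constructor
    · rintro ⟨m, hs, h⟩; exact ⟨m, hs, ih.1 h⟩
    · rintro ⟨m, hs, h⟩; exact ⟨m, hs, ih.2 h⟩

lemma gC_sound_path {w : List β} (hw : w ∈ (gC g step q0 qf).language) :
    NPath step w q0 qf := by
  have hd : (gC g step q0 qf).Derives [Symbol.nonterminal (Sum.inl ())]
      (List.map Symbol.terminal w) := hw
  have h0 : relList g step q0 qf [Symbol.nonterminal (Sum.inl ())] q0 qf :=
    ⟨qf, ⟨rfl, rfl⟩, rfl⟩
  exact (relList_map_terminal g step q0 qf).1 (gC_derives_relList g step q0 qf hd h0)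

lemma produces_nil_false {t : List (Symbol β g.NT)} (h : g.Produces [] t) : False := by
  obtain ⟨r, -, hr⟩ := h
  obtain ⟨p, q, h1, -⟩ := hr.exists_parts
  have := congrArg List.length h1
  simp at this

lemma derivesIn_zero_eq {s t : List (Symbol β g.NT)} (h : DerivesIn g s t 0) : s = t := by
  cases h
  rfl

lemma derivesIn_succ_inv {s t : List (Symbol β g.NT)} {k : ℕ}
    (h : DerivesIn g s t (k + 1)) : ∃ v, g.Produces s v ∧ DerivesIn g v t k := by
  cases h with
  | head hp hd => exact ⟨_, hp, hd⟩

/-- Main completeness induction. -/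
lemma gC_complete_main : ∀ (n : ℕ) (s : List (Symbol β g.NT)) (n' : ℕ), n' ≤ n →
    ∀ (w : List β) (p q : Q), DerivesIn g s (List.map Symbol.terminal w) n' →
    NPath step w p q →
    ∃ sh, Lifts g p s q sh ∧ (gC g step q0 qf).Derives sh (List.map Symbol.terminal w) := by
  intro n
  induction n using Nat.strong_induction_on with
  | _ n IHn =>
  intro s
  induction s with
  | nil =>
    intro n' hn' w p q hd hp
    have hw : List.map (Symbol.terminal : β → Symbol β g.NT) w = [] := by
      rcases hd.derives.eq_or_head with heq | ⟨v, hpr, -⟩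
      · exact heq.symm
      · exact absurd hpr (produces_nil_false g)
    have hwnil : w = [] := by simpa using hw
    subst hwnil
    have hpq : p = q := hp
    subst hpq
    exact ⟨[], Lifts.nil p, Derives.refl _⟩
  | cons X rest ihrest =>
    intro n' hn' w p q hd hp
    obtain ⟨t₁, t₂, n₁, n₂, hteq, hneq, hd1, hd2⟩ := hd.append_split [X] rest rfl
    obtain ⟨w₁, w₂, rfl, hw1, hw2⟩ := List.map_eq_append_iff.1 hteq
    subst hw1 hw2
    obtain ⟨m, hp1, hp2⟩ := (npath_append step).1 hp
    -- lift of the single symbol X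
    have hX : ∃ sh1, Lifts g p [X] m sh1 ∧
        (gC g step q0 qf).Derives sh1 (List.map Symbol.terminal w₁) := by
      cases X with
      | terminal b =>
        have ht1 : List.map (Symbol.terminal : β → Symbol β g.NT) w₁ = [Symbol.terminal b] :=
          derives_map_terminal_eq (w := [b]) hd1.derives
        have hw1b : w₁ = [b] := by
          cases w₁ with
          | nil => simp at ht1
          | cons c w' =>
            simp only [List.map_cons, List.cons.injEq] at ht1
            obtain ⟨h1, h2⟩ := ht1
            have hc : c = b := Symbol.terminal.inj h1
            have hw' : w' = [] := by simpa using h2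
            rw [hc, hw']
        subst hw1b
        obtain ⟨m', hstep, hm'⟩ : ∃ m', step p b m' ∧ m' = m := hp1
        rw [hm'] at hstep
        refine ⟨[liftSym g p (Symbol.terminal b) m], ?_, ?_⟩
        · exact Lifts.cons p m m _ _ _ (Lifts.nil m)
        · refine Produces.single ⟨⟨Sum.inr (p, Sum.inr b, m), [Symbol.terminal b]⟩, ?_, ?_⟩
          · exact (mem_gC_rules g step q0 qf).2
              (Or.inl (Or.inr ⟨(p, b, m), hstep, rfl⟩))
          · exact ContextFreeRule.Rewrites.input_output
      | nonterminal A =>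
        cases n₁ with
        | zero =>
          exfalso
          have heq := derivesIn_zero_eq g hd1
          have : (Symbol.nonterminal A : Symbol β g.NT)
              ∈ List.map Symbol.terminal w₁ := by
            rw [← heq]
            simp
          exact nt_not_mem_map_terminal this
        | succ k =>
          obtain ⟨v, hpr, hd1'⟩ := derivesIn_succ_inv g hd1
          obtain ⟨r, hrmem, hrw⟩ := hpr
          obtain ⟨hri, hrv⟩ := rewrites_singleton_nt hrw
          subst hrv
          subst hri
          have hk : k < n := by omega
          obtain ⟨sh', hlift', hder'⟩ :=
            IHn k hk r.output k le_rfl w₁ p m hd1' hp1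
          refine ⟨[liftSym g p (Symbol.nonterminal r.input) m], ?_, ?_⟩
          · exact Lifts.cons p m m _ _ _ (Lifts.nil m)
          · have hrulemem : (⟨Sum.inr (p, Sum.inl r.input, m), sh'⟩ :
                ContextFreeRule β (NTC g Q)) ∈ (gC g step q0 qf).rules := by
              refine (mem_gC_rules g step q0 qf).2 (Or.inr ?_)
              simp only [Set.mem_iUnion]
              exact ⟨r, hrmem, p, m, sh', hlift', rfl⟩
            refine Produces.trans_derives ⟨_, hrulemem, ?_⟩ hder'
            exact ContextFreeRule.Rewrites.input_output
    obtain ⟨sh1, hlift₁, hder₁⟩ := hX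
    obtain ⟨m', t, hsh1, ht⟩ := lifts_cons_inv g hlift₁
    obtain ⟨hm'q, htnil⟩ := lifts_nil_inv g ht
    subst htnil
    rw [hm'q] at hsh1
    obtain ⟨sh2, hlift₂, hder₂⟩ := ihrest n₂ (by omega) w₂ m q hd2 hp2
    refine ⟨liftSym g p X m :: sh2, Lifts.cons p m q _ _ _ hlift₂, ?_⟩
    rw [List.map_append]
    have := derives_append (hsh1 ▸ hder₁) hder₂
    simpa using this

lemma gC_complete {w : List β} (hw : w ∈ g.language) (hp : NPath step w q0 qf) :
    w ∈ (gC g step q0 qf).language := by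
  obtain ⟨n, hn⟩ := derivesIn_of_derives (show g.Derives [Symbol.nonterminal g.initial]
    (List.map Symbol.terminal w) from hw)
  obtain ⟨sh, hlift, hder⟩ := gC_complete_main g step q0 qf n _ n le_rfl w q0 qf hn hp
  obtain ⟨m, t, rfl, ht⟩ := lifts_cons_inv g hlift
  obtain ⟨hmq, htnil⟩ := lifts_nil_inv g ht
  subst htnil
  rw [hmq] at hder
  show (gC g step q0 qf).Derives [Symbol.nonterminal (Sum.inl ())] _
  refine Produces.trans_derives ⟨ruleCStart g q0 qf,
    (mem_gC_rules g step q0 qf).2 (Or.inl (Or.inl rfl)), ?_⟩ hder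
  exact ContextFreeRule.Rewrites.input_output

lemma gC_language :
    (gC g step q0 qf).language = {w | w ∈ g.language ∧ NPath step w q0 qf} := by
  ext w
  exact ⟨fun hw => ⟨gC_sound_lang g step q0 qf hw, gC_sound_path g step q0 qf hw⟩,
    fun ⟨h1, h2⟩ => gC_complete g step q0 qf h1 h2⟩

end IntersectionLemma

section Assembly

set_option linter.unusedSectionVars false

variable {α Δ : Type} [Finite α] [Finite Δ] (hw : Δ → List α)

/-- State set: suffixes of the chosen words. -/
def SQ : Set (List α) := {[]} ∪ ⋃ d : Δ, {l | l ∈ (hw d).tails}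

lemma SQ_finite [Finite Δ] : (SQ hw).Finite :=
  (Set.finite_singleton _).union (Set.finite_iUnion fun d => (hw d).tails.finite_toSet)

lemma mem_SQ_nil : [] ∈ SQ hw := Set.mem_union_left _ rfl

lemma mem_SQ_of_suffix {d : Δ} {l : List α} (h : l <:+ hw d) : l ∈ SQ hw :=
  Set.mem_union_right _ (Set.mem_iUnion.2 ⟨d, (List.mem_tails _ _).2 h⟩)

/-- The automaton's states. -/
abbrev QS := ↥(SQ hw)

/-- Boundary state. -/
def boundary : QS hw := ⟨[], mem_SQ_nil hw⟩

/-- Transition relation. -/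
def stp : QS hw → α ⊕ Δ → QS hw → Prop :=
  fun x b y =>
    match b with
    | Sum.inl a => (x : List α) = a :: (y : List α)
    | Sum.inr d => (x : List α) = [] ∧ (y : List α) = hw d

instance QS_finite : Finite (QS hw) := (SQ_finite hw).to_subtype

/-- Block encoding of a word. -/
def EE : List Δ → List (α ⊕ Δ) :=
  fun w => w.flatMap fun d => Sum.inr d :: (hw d).map Sum.inl

lemma EE_nil : EE hw [] = [] := rfl
lemma EE_cons (d : Δ) (w : List Δ) :
    EE hw (d :: w) = Sum.inr d :: ((hw d).map Sum.inl ++ EE hw w) := rfl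

lemma blockpath {d : Δ} : ∀ (t : List α) (_ : t <:+ hw d) (q : QS hw),
    (q : List α) = t → NPath (stp hw) (t.map Sum.inl) q (boundary hw) := by
  intro t
  induction t with
  | nil =>
    intro _ q hq
    show q = boundary hw
    exact Subtype.ext (by rw [hq]; rfl)
  | cons a t ih =>
    intro hsuf q hq
    have hsuf' : t <:+ hw d := ((t.suffix_cons a).trans hsuf)
    refine ⟨⟨t, mem_SQ_of_suffix hw hsuf'⟩, ?_, ih hsuf' _ rfl⟩
    exact hq

lemma npath_EE (w : List Δ) : NPath (stp hw) (EE hw w) (boundary hw) (boundary hw) := by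
  induction w with
  | nil => rfl
  | cons d w ih =>
    rw [EE_cons]
    refine ⟨⟨hw d, mem_SQ_of_suffix hw (List.suffix_refl _)⟩, ⟨rfl, rfl⟩, ?_⟩
    exact (npath_append (stp hw)).2 ⟨boundary hw,
      blockpath hw (hw d) (List.suffix_refl _) _ rfl, ih⟩

lemma consume : ∀ (t : List α) (v : List (α ⊕ Δ)) (q : QS hw), (q : List α) = t →
    NPath (stp hw) v q (boundary hw) →
    ∃ v₂, v = t.map Sum.inl ++ v₂ ∧ NPath (stp hw) v₂ (boundary hw) (boundary hw) := by
  intro t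
  induction t with
  | nil =>
    intro v q hq hp
    have : q = boundary hw := Subtype.ext (by rw [hq]; rfl)
    subst this
    exact ⟨v, rfl, hp⟩
  | cons a t ih =>
    intro v q hq hp
    cases v with
    | nil =>
      exfalso
      have : q = boundary hw := hp
      rw [this] at hq
      exact List.cons_ne_nil _ _ hq.symm
    | cons y v' =>
      obtain ⟨m, hst, hrest⟩ := hp
      cases y with
      | inr d =>
        exfalso
        obtain ⟨h1, -⟩ := hst
        rw [hq] at h1
        exact List.cons_ne_nil _ _ h1
      | inl a' =>
        have h1 : (q : List α) = a' :: (m : List α) := hst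
        rw [hq] at h1
        have ha : a' = a := (List.cons.inj h1.symm).1
        have hm : (m : List α) = t := (List.cons.inj h1.symm).2
        obtain ⟨v₂, rfl, hp₂⟩ := ih v' m hm hrest
        exact ⟨v₂, by rw [ha]; simp, hp₂⟩

lemma npath_EE_inv : ∀ (n : ℕ) (v : List (α ⊕ Δ)), v.length ≤ n →
    NPath (stp hw) v (boundary hw) (boundary hw) → ∃ w, v = EE hw w := by
  intro n
  induction n with
  | zero =>
    intro v hv _
    have : v = [] := List.eq_nil_of_length_eq_zero (Nat.le_zero.1 hv)
    exact ⟨[], this⟩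
  | succ n ih =>
    intro v hv hp
    cases v with
    | nil => exact ⟨[], rfl⟩
    | cons x v' =>
      obtain ⟨m, hst, hrest⟩ := hp
      cases x with
      | inl a =>
        exfalso
        have : ([] : List α) = a :: (m : List α) := hst
        exact List.cons_ne_nil _ _ this.symm
      | inr d =>
        obtain ⟨-, hm⟩ := hst
        obtain ⟨v₂, rfl, hp₂⟩ := consume hw (hw d) v' m hm hrest
        have hlen : v₂.length ≤ n := by
          have := hv
          simp only [List.length_cons, List.length_append, List.length_map] at this ⊢
          omega
        obtain ⟨w, rfl⟩ := ih v₂ hlen hp₂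
        exact ⟨d :: w, rfl⟩

lemma projl_map_inl_append (u : List α) (v : List (α ⊕ Δ)) :
    projl (u.map Sum.inl ++ v) = u ++ projl v := by
  induction u with
  | nil => rfl
  | cons a u ih => simp [ih]

lemma projl_EE (w : List Δ) : projl (EE hw w) = w.flatMap hw := by
  induction w with
  | nil => rfl
  | cons d w ih =>
    rw [EE_cons, List.flatMap_cons]
    simp only [projl_cons_inr, projl_map_inl_append, ih]

/-- Final output map. -/
def fF : α ⊕ Δ → List Δ := Sum.elim (fun _ => []) (fun d => [d])

lemma flatMap_fF_map_inl (u : List α) :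
    (u.map (Sum.inl : α → α ⊕ Δ)).flatMap (fF (α := α) (Δ := Δ)) = [] := by
  induction u with
  | nil => rfl
  | cons a u ih => simp [fF, ih]

lemma flatMap_fF_EE (w : List Δ) : (EE hw w).flatMap (fF (α := α) (Δ := Δ)) = w := by
  induction w with
  | nil => rfl
  | cons d w ih =>
    rw [EE_cons, List.flatMap_cons, List.flatMap_append, flatMap_fF_map_inl, ih]
    rfl

end Assembly

end CFWP


/-- Theorem 6.4 (for context-free languages): if the word problem of a group `G` is
context-free with respect to one choice of generators, then it is context-free with
respect to any choice of generators. -/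
theorem wordProblem_contextFree_independent_of_generators
    {α Δ : Type} [Fintype α] [Fintype Δ] {G : Type} [Group G]
    (σ : FreeMonoid α →* G) (hσ : Function.Surjective σ)
    (τ : FreeMonoid Δ →* G) (hτ : Function.Surjective τ)
    (h : Language.IsContextFree {w : List α | σ (FreeMonoid.ofList w) = 1}) :
    Language.IsContextFree {w : List Δ | τ (FreeMonoid.ofList w) = 1} := by
  classical
  obtain ⟨g₀, hg₀⟩ := h
  have hchoice : ∀ d : Δ, ∃ l : List α, σ (FreeMonoid.ofList l) = τ (FreeMonoid.of d) := by
    intro d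
    obtain ⟨x, hx⟩ := hσ (τ (FreeMonoid.of d))
    exact ⟨FreeMonoid.toList x, by rw [FreeMonoid.ofList_toList]; exact hx⟩
  choose hw hhw using hchoice
  have halg : ∀ w : List Δ,
      σ (FreeMonoid.ofList (w.flatMap hw)) = τ (FreeMonoid.ofList w) := by
    intro w
    induction w with
    | nil =>
      show σ 1 = τ 1
      rw [map_one, map_one]
    | cons d w ih =>
      rw [List.flatMap_cons, FreeMonoid.ofList_append, map_mul, ih, hhw,
        FreeMonoid.ofList_cons, map_mul]
  refine ⟨CFWP.gA (CFWP.gC (CFWP.gB (Γ := Δ) g₀) (CFWP.stp hw)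
    (CFWP.boundary hw) (CFWP.boundary hw)) (CFWP.fF (α := α) (Δ := Δ)), ?_⟩
  rw [CFWP.gA_language, CFWP.gC_language, CFWP.gB_language, hg₀]
  ext u
  constructor
  · rintro ⟨v, ⟨hproj, hpath⟩, rfl⟩
    obtain ⟨w, rfl⟩ := CFWP.npath_EE_inv hw v.length v le_rfl hpath
    rw [CFWP.flatMap_fF_EE]
    show τ (FreeMonoid.ofList w) = 1
    have hproj' : σ (FreeMonoid.ofList (CFWP.projl (CFWP.EE hw w))) = 1 := hproj
    rw [CFWP.projl_EE] at hproj'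
    rw [← halg w]
    exact hproj'
  · intro hu
    refine ⟨CFWP.EE hw u, ⟨?_, CFWP.npath_EE hw u⟩, (CFWP.flatMap_fF_EE hw u).symm⟩
    show σ (FreeMonoid.ofList (CFWP.projl (CFWP.EE hw u))) = 1
    rw [CFWP.projl_EE, halg u]
    exact hu
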